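/- arXiv:0704.2378 — 7 statements merged into one kernel-verified Lean document; each statement's English description precedes it below -/
import Mathlib

section
/- Let K be a field, A a K-algebra, V a K-subspace of A with 1 ∈ V, and z ∈ A. Order ℕ × ℕ by (m₁,p₁) ≺ (m₂,p₂) iff m₁+p₁ < m₂+p₂ or (m₁+p₁ = m₂+p₂ and m₁ < m₂). Suppose that for every (m,p) ∈ ℕ × ℕ with m,p ≥ 1, the space V^m z V^p is not contained in Σ_{(i,j) ≺ (m,p)} V^i z V^j. Then for every n ≥ 1, dim_K(V^n z V^n) ≥ n². -/
set_option maxHeartbeats 1000000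

def paperRel (a b : ℕ × ℕ) : Prop :=
  a.1 + a.2 < b.1 + b.2 ∨ (a.1 + a.2 = b.1 + b.2 ∧ a.1 < b.1)

private lemma pow_mono_aux {K A : Type*} [Field K] [Ring A] [Algebra K A]
    (V : Submodule K A) (hV : (1 : A) ∈ V) {m n : ℕ} (h : m ≤ n) : V ^ m ≤ V ^ n := by
  have h1 : (1 : Submodule K A) ≤ V := Submodule.one_le.mpr hV
  have hp : ∀ k : ℕ, (1 : Submodule K A) ≤ V ^ k := by
    intro k
    induction k with
    | zero => simp
    | succ k ih =>
      calc (1 : Submodule K A) = 1 * 1 := (one_mul 1).symm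
        _ ≤ V ^ k * V := mul_le_mul' ih h1
        _ = V ^ (k+1) := (pow_succ V k).symm
  calc V ^ m = V ^ m * 1 := (mul_one _).symm
    _ ≤ V ^ m * V ^ (n - m) := mul_le_mul' le_rfl (hp _)
    _ = V ^ n := by rw [← pow_add]; congr 1; omega

theorem stmt3 {K A : Type*} [Field K] [Ring A] [Algebra K A]
    (V : Submodule K A) (hV : (1 : A) ∈ V) (z : A)
    (h : ∀ m p : ℕ, 1 ≤ m → 1 ≤ p →
      ¬ (V ^ m * Submodule.span K {z} * V ^ p ≤
        ⨆ (q : ℕ × ℕ) (_ : paperRel q (m, p)), V ^ q.1 * Submodule.span K {z} * V ^ q.2)) :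
    ∀ n : ℕ, 1 ≤ n →
      (n ^ 2 : Cardinal) ≤ Module.rank K (V ^ n * Submodule.span K {z} * V ^ n : Submodule K A) := by
  classical
  have H : ∀ q : ℕ × ℕ, ∃ x : A,
      x ∈ V ^ (q.1 + 1) * Submodule.span K {z} * V ^ (q.2 + 1) ∧
      x ∉ ⨆ (r : ℕ × ℕ) (_ : paperRel r (q.1 + 1, q.2 + 1)),
        V ^ r.1 * Submodule.span K {z} * V ^ r.2 := by
    intro q
    exact SetLike.not_le_iff_exists.mp (h (q.1 + 1) (q.2 + 1) (by omega) (by omega))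
  choose x hx hxn using H
  intro n hn
  set S : Submodule K A := V ^ n * Submodule.span K {z} * V ^ n with hS
  set v : Fin n × Fin n → A := fun q => x ((q.1 : ℕ), (q.2 : ℕ)) with hv
  have hmem : ∀ q : Fin n × Fin n, v q ∈ S := by
    intro q
    have ha : V ^ ((q.1 : ℕ) + 1) ≤ V ^ n := pow_mono_aux V hV (by omega)
    have hb : V ^ ((q.2 : ℕ) + 1) ≤ V ^ n := pow_mono_aux V hV (by omega)
    have h1 : V ^ ((q.1 : ℕ) + 1) * Submodule.span K {z} * V ^ ((q.2 : ℕ) + 1) ≤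
        V ^ n * Submodule.span K {z} * V ^ n :=
      mul_le_mul' (mul_le_mul' ha le_rfl) hb
    rw [hS]
    exact h1 (hx ((q.1 : ℕ), (q.2 : ℕ)))
  have hli : LinearIndependent K v := by
    rw [Fintype.linearIndependent_iff]
    intro g hsum
    by_contra hcon
    push_neg at hcon
    obtain ⟨i0, hi0⟩ := hcon
    set s : Finset (Fin n × Fin n) := Finset.univ.filter (fun i => g i ≠ 0) with hsdef
    have hs : s.Nonempty := ⟨i0, by simp [hsdef, hi0]⟩
    obtain ⟨M, hM, hMmax⟩ := s.exists_max_image (fun q => (q.1 : ℕ) + (q.2 : ℕ)) hs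
    set s2 : Finset (Fin n × Fin n) :=
      s.filter (fun q => (q.1 : ℕ) + (q.2 : ℕ) = (M.1 : ℕ) + (M.2 : ℕ)) with hs2def
    obtain ⟨m, hm2, hmmax⟩ := s2.exists_max_image (fun q => (q.1 : ℕ)) ⟨M, by simp [hs2def, hM]⟩
    have hms : m ∈ s := (Finset.mem_filter.mp hm2).1
    have hmsum : (m.1 : ℕ) + (m.2 : ℕ) = (M.1 : ℕ) + (M.2 : ℕ) := (Finset.mem_filter.mp hm2).2
    have hgm : g m ≠ 0 := by
      have := Finset.mem_filter.mp hms
      simpa using this.2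
    have hbelow : ∀ i ∈ s, i ≠ m → paperRel ((i.1 : ℕ) + 1, (i.2 : ℕ) + 1)
        ((m.1 : ℕ) + 1, (m.2 : ℕ) + 1) := by
      intro i his hne
      have h1 : (i.1 : ℕ) + (i.2 : ℕ) ≤ (M.1 : ℕ) + (M.2 : ℕ) := hMmax i his
      rcases lt_or_eq_of_le h1 with hlt | heq
      · exact Or.inl (by simp only; omega)
      · have hi2 : i ∈ s2 := Finset.mem_filter.mpr ⟨his, heq⟩
        have h2 : (i.1 : ℕ) ≤ (m.1 : ℕ) := hmmax i hi2
        rcases lt_or_eq_of_le h2 with hlt2 | heq2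
        · exact Or.inr ⟨by simp only; omega, by simp only; omega⟩
        · exfalso
          apply hne
          have hieq : (i.2 : ℕ) = (m.2 : ℕ) := by omega
          ext
          · exact heq2
          · exact hieq
    set T : Submodule K A := ⨆ (r : ℕ × ℕ) (_ : paperRel r ((m.1 : ℕ) + 1, (m.2 : ℕ) + 1)),
      V ^ r.1 * Submodule.span K {z} * V ^ r.2 with hT
    have hsum2 : ∑ i ∈ s, g i • v i = 0 := by
      rw [← hsum, hsdef]
      refine Finset.sum_filter_of_ne ?_
      intro i _ hgi
      intro hgz
      exact hgi (by rw [hgz, zero_smul])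
    have hsplit : g m • v m = - ∑ i ∈ s.erase m, g i • v i := by
      have h3 := Finset.add_sum_erase s (fun i => g i • v i) hms
      rw [hsum2] at h3
      exact eq_neg_of_add_eq_zero_left h3
    have hTer : (∑ i ∈ s.erase m, g i • v i) ∈ T := by
      refine Submodule.sum_mem T ?_
      intro i hi
      have his : i ∈ s := Finset.mem_of_mem_erase hi
      have hne : i ≠ m := Finset.ne_of_mem_erase hi
      refine Submodule.smul_mem T _ ?_
      have hxi := hx ((i.1 : ℕ), (i.2 : ℕ))
      have hle : V ^ ((i.1 : ℕ) + 1) * Submodule.span K {z} * V ^ ((i.2 : ℕ) + 1) ≤ T := by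
        rw [hT]
        exact le_iSup₂ (f := fun (r : ℕ × ℕ) (_ : paperRel r ((m.1 : ℕ) + 1, (m.2 : ℕ) + 1)) =>
          V ^ r.1 * Submodule.span K {z} * V ^ r.2)
          ((i.1 : ℕ) + 1, (i.2 : ℕ) + 1) (hbelow i his hne)
      exact hle hxi
    have hvmT : v m ∈ T := by
      have : v m = (g m)⁻¹ • (g m • v m) := (inv_smul_smul₀ hgm (v m)).symm
      rw [this, hsplit]
      exact Submodule.smul_mem T _ (Submodule.neg_mem T hTer)
    exact hxn ((m.1 : ℕ), (m.2 : ℕ)) hvmT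
  -- pass to the submodule and to a universe-appropriate index type
  set w : ULift.{_} (Fin n × Fin n) → S := fun q => ⟨v q.down, hmem q.down⟩ with hw
  have hliw : LinearIndependent K w := by
    have h1 : LinearIndependent K (v ∘ ULift.down) := hli.comp ULift.down ULift.down_injective
    exact LinearIndependent.of_comp S.subtype h1
  have hcard := hliw.cardinal_le_rank
  have hmk : Cardinal.mk (ULift.{_} (Fin n × Fin n)) = ((n ^ 2 : ℕ) : Cardinal) := by
    simp [Cardinal.mk_fintype, pow_two]
  rw [hmk] at hcard
  calc (n ^ 2 : Cardinal) = ((n ^ 2 : ℕ) : Cardinal) := by push_cast; ring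
    _ ≤ Module.rank K S := hcard
end

section
/- Let K be a field, A a K-algebra, V a K-subspace of A with 1 ∈ V that generates A as a K-algebra (so A = ∪_n V^n), and z ∈ A. Order ℕ × ℕ by (m₁,p₁) ≺ (m₂,p₂) iff m₁+p₁ < m₂+p₂ or (m₁+p₁ = m₂+p₂ and m₁ < m₂). Suppose there exist m, p ≥ 1 with m ≥ p such that V^m z V^p ⊆ Σ_{(i,j) ≺ (m,p)} V^i z V^j. Then A z A ⊆ V^m z A + A z V^m. -/
theorem stmt4 {K A : Type*} [Field K] [Ring A] [Algebra K A]
    (V : Submodule K A) (hV : (1 : A) ∈ V)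
    (hgen : ∀ a : A, ∃ n : ℕ, a ∈ V ^ n) (z : A) (m p : ℕ) (hp : 1 ≤ p) (hmp : p ≤ m)
    (h : V ^ m * Submodule.span K {z} * V ^ p ≤
      ⨆ (q : ℕ × ℕ) (_ : paperRel q (m, p)), V ^ q.1 * Submodule.span K {z} * V ^ q.2) :
    (⊤ : Submodule K A) * Submodule.span K {z} * ⊤ ≤
      V ^ m * Submodule.span K {z} * ⊤ + ⊤ * Submodule.span K {z} * V ^ m := by
  set Z := Submodule.span K {z} with hZ
  set T := V ^ m * Z * ⊤ + ⊤ * Z * V ^ m with hT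
  have pow_mono : ∀ {i j : ℕ}, i ≤ j → V ^ i ≤ V ^ j := by
    intro i j hij
    induction j, hij using Nat.le_induction with
    | base => exact le_refl _
    | succ n hn ih =>
      refine ih.trans ?_
      calc V ^ n = V ^ n * 1 := (mul_one _).symm
      _ ≤ V ^ n * V := mul_le_mul_right (Submodule.one_le.2 hV) _
      _ = V ^ (n + 1) := (pow_succ V n).symm
  have key : ∀ M : ℕ, ∀ i j : ℕ, (i + j) * (i + j) + i ≤ M → V ^ i * Z * V ^ j ≤ T := by
    intro M
    induction M using Nat.strong_induction_on with
    | _ M IH =>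
      intro i j hM
      by_cases hi : i ≤ m
      · refine le_trans ?_ le_sup_left
        exact mul_le_mul' (mul_le_mul' (pow_mono hi) le_rfl) le_top
      · by_cases hj : j ≤ m
        · refine le_trans ?_ le_sup_right
          exact mul_le_mul' (mul_le_mul' le_top le_rfl) (pow_mono hj)
        · push_neg at hi hj
          have e1 : V ^ i = V ^ (i - m) * V ^ m := by
            rw [← pow_add]; congr 1; omega
          have e2 : V ^ j = V ^ p * V ^ (j - p) := by
            rw [← pow_add]; congr 1; omega
          calc V ^ i * Z * V ^ j
              = V ^ (i - m) * (V ^ m * Z * V ^ p) * V ^ (j - p) := by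
                rw [e1, e2]; simp only [mul_assoc]
            _ ≤ V ^ (i - m) * (⨆ (q : ℕ × ℕ) (_ : paperRel q (m, p)),
                  V ^ q.1 * Z * V ^ q.2) * V ^ (j - p) :=
                mul_le_mul' (mul_le_mul' le_rfl h) le_rfl
            _ = ⨆ (q : ℕ × ℕ) (_ : paperRel q (m, p)),
                  V ^ (i - m) * (V ^ q.1 * Z * V ^ q.2) * V ^ (j - p) := by
                simp only [Submodule.mul_iSup, Submodule.iSup_mul]
            _ ≤ T := by
                refine iSup_le fun q => iSup_le fun hq => ?_
                obtain ⟨a, b⟩ := q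
                have heq : V ^ (i - m) * (V ^ a * Z * V ^ b) * V ^ (j - p)
                    = V ^ (i - m + a) * Z * V ^ (b + (j - p)) := by
                  rw [pow_add, pow_add]; simp only [mul_assoc]
                rw [heq]
                set i' := i - m + a with hi'
                set j' := b + (j - p) with hj'
                have hμ : (i' + j') * (i' + j') + i' < M := by
                  have hle : (i' + j') * (i' + j') + i' < (i + j) * (i + j) + i := by
                    rcases hq with hlt | ⟨heqs, hlt⟩
                    · simp only [paperRel] at hlt
                      have hs : i' + j' < i + j := by omega
                      have : i' ≤ i' + j' := Nat.le_add_right _ _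
                      nlinarith
                    · simp only at heqs hlt
                      have hs : i' + j' = i + j := by omega
                      have : i' < i := by omega
                      rw [hs]; exact Nat.add_lt_add_left this _
                  omega
                exact IH _ hμ i' j' le_rfl
  have htop : (⊤ : Submodule K A) ≤ ⨆ n : ℕ, V ^ n := by
    intro a _
    obtain ⟨n, hn⟩ := hgen a
    exact Submodule.mem_iSup_of_mem n hn
  calc (⊤ : Submodule K A) * Z * ⊤
      ≤ (⨆ n : ℕ, V ^ n) * Z * (⨆ n : ℕ, V ^ n) :=
        mul_le_mul' (mul_le_mul' htop le_rfl) htop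
    _ = ⨆ i : ℕ, ⨆ j : ℕ, V ^ i * Z * V ^ j := by
        simp only [Submodule.iSup_mul, Submodule.mul_iSup]; exact iSup_comm
    _ ≤ T := iSup_le fun i => iSup_le fun j => key _ i j le_rfl
end

section
/- Let K be a field, let A be a prime K-algebra, let V be a K-subspace of A with 1 ∈ V, let d ≥ 1, and let u ∈ A. Suppose that A u A ⊆ V^d u A + A u V^d, and that there exists k ≥ 1 with (V^d u)^k = (0) and (u V^d)^k = (0). Then u = 0. -/
theorem stmt6 {K A : Type*} [Field K] [Ring A] [Algebra K A]
    (hprime : ∀ a b : A, (∀ r : A, a * r * b = 0) → a = 0 ∨ b = 0)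
    (V : Submodule K A) (hV : (1 : A) ∈ V) (d : ℕ) (hd : 1 ≤ d) (u : A)
    (h : (⊤ : Submodule K A) * Submodule.span K {u} * ⊤ ≤
      V ^ d * Submodule.span K {u} * ⊤ + ⊤ * Submodule.span K {u} * V ^ d)
    (hnil : ∃ k : ℕ, 1 ≤ k ∧ (V ^ d * Submodule.span K {u}) ^ k = ⊥ ∧
      (Submodule.span K {u} * V ^ d) ^ k = ⊥) :
    u = 0 := by
  classical
  by_contra hu
  obtain ⟨k, hk1, hPk, hQk⟩ := hnil
  set U := Submodule.span K {u} with hUdef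
  set W := V ^ d with hWdef
  set P := W * U with hPdef
  set Q := U * W with hQdef
  have hmemu : u ∈ U := Submodule.mem_span_singleton_self u
  -- auxiliary: Q ^ j * U = U * P ^ j
  have aux : ∀ j : ℕ, Q ^ j * U = U * P ^ j := by
    intro j
    induction j with
    | zero => rw [pow_zero, pow_zero, one_mul, mul_one]
    | succ n ih =>
      calc Q ^ (n + 1) * U = Q ^ n * (Q * U) := by rw [pow_succ, mul_assoc]
        _ = Q ^ n * (U * P) := by rw [hQdef, hPdef, mul_assoc]
        _ = (Q ^ n * U) * P := by rw [mul_assoc]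
        _ = U * P ^ n * P := by rw [ih]
        _ = U * P ^ (n + 1) := by rw [mul_assoc, ← pow_succ]
  -- find maximal m with U * P ^ m ≠ ⊥
  have hexk : ∃ n : ℕ, U * P ^ n = ⊥ := ⟨k, by rw [hPk, Submodule.mul_bot]⟩
  have hfind := Nat.find_spec hexk
  have hpos : Nat.find hexk ≠ 0 := by
    intro h0
    rw [h0, pow_zero, mul_one] at hfind
    exact hu (Submodule.span_singleton_eq_bot.mp hfind)
  obtain ⟨m, hm⟩ : ∃ m, Nat.find hexk = m + 1 :=
    ⟨Nat.find hexk - 1, (Nat.succ_pred_eq_of_pos (Nat.pos_of_ne_zero hpos)).symm⟩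
  have hX1 : U * P ^ (m + 1) = ⊥ := hm ▸ hfind
  have hXne : U * P ^ m ≠ ⊥ := Nat.find_min hexk (by omega)
  set X := U * P ^ m with hXdef
  have hXP : X * P = ⊥ := by
    rw [hXdef, mul_assoc, ← pow_succ]
    exact hX1
  have hQX : Q * X = ⊥ := by
    rw [hXdef, ← aux m, ← mul_assoc, ← pow_succ', aux (m + 1)]
    exact hX1
  have hkey : X * ⊤ * U * ⊤ * X = ⊥ := by
    have step1 : X * ⊤ * U * ⊤ * X ≤ X * (P * ⊤ + ⊤ * U * W) * X := by
      rw [mul_assoc X ⊤ U, mul_assoc X (⊤ * U) ⊤]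
      exact mul_le_mul' (mul_le_mul' le_rfl h) le_rfl
    have t1 : X * (P * ⊤) * X = ⊥ := by
      rw [← mul_assoc X P ⊤, hXP, Submodule.bot_mul, Submodule.bot_mul]
    have t2 : X * (⊤ * U * W) * X = ⊥ := by
      rw [mul_assoc ⊤ U W, ← mul_assoc X ⊤ (U * W), mul_assoc (X * ⊤) (U * W) X,
        ← hQdef, hQX, Submodule.mul_bot]
    have step2 : X * (P * ⊤ + ⊤ * U * W) * X = ⊥ := by
      rw [mul_add, add_mul, t1, t2]
      simp
    exact le_bot_iff.mp (step1.trans step2.le)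
  obtain ⟨x, hxX, hx0⟩ := (Submodule.ne_bot_iff _).mp (hXdef ▸ hXne)
  have husx : ∀ s : A, u * s * x = 0 := by
    intro s
    have hall : ∀ r : A, x * r * (u * s * x) = 0 := by
      intro r
      have hmem : x * r * u * s * x ∈ X * ⊤ * U * ⊤ * X :=
        Submodule.mul_mem_mul (Submodule.mul_mem_mul (Submodule.mul_mem_mul
          (Submodule.mul_mem_mul hxX Submodule.mem_top) hmemu) Submodule.mem_top) hxX
      rw [hkey] at hmem
      have h0 : x * r * u * s * x = 0 := by simpa using hmem
      calc x * r * (u * s * x) = x * r * u * s * x := by rw [← mul_assoc, ← mul_assoc]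
        _ = 0 := h0
    rcases hprime x (u * s * x) hall with h1 | h1
    · exact absurd h1 hx0
    · exact h1
  rcases hprime u x husx with h1 | h1
  · exact hu h1
  · exact hx0 h1
end

section
/- Let p : ℕ → ℕ be a function and define words over {x, y} by v₁ = x and v_{n+1} = v_n y^{p(n)} v_n. Then: (a) for every m ≥ n, v_n is a prefix of v_m; and (b) for any two factors (contiguous subwords) u and w of some v_n, there exist a word t and an index m such that the concatenation u t w is a factor of v_m. -/
/-- The words `v₁ = x`, `v_{n+1} = v_n y^{p(n)} v_n`, over the alphabet `{x, y}`
encoded as `Bool` with `x = true`, `y = false`. (`v₀ := []` is a junk value.) -/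
def zelWord (p : ℕ → ℕ) : ℕ → List Bool
  | 0 => []
  | 1 => [true]
  | (n + 2) => zelWord p (n + 1) ++ List.replicate (p (n + 1)) false ++ zelWord p (n + 1)

theorem stmt9 (p : ℕ → ℕ) :
    (∀ n m : ℕ, 1 ≤ n → n ≤ m → (zelWord p n) <+: (zelWord p m)) ∧
    (∀ (n : ℕ) (u w : List Bool), u <:+: zelWord p n → w <:+: zelWord p n →
      ∃ (t : List Bool) (m : ℕ), (u ++ t ++ w) <:+: zelWord p m) := by
  constructor
  · intro n m hn hnm
    induction m, hnm using Nat.le_induction with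
    | base => exact List.prefix_refl _
    | succ m hm ih =>
      refine ih.trans ?_
      obtain ⟨k, rfl⟩ := Nat.exists_eq_add_of_le (hn.trans hm)
      rw [Nat.add_comm 1 k]
      show zelWord p (k + 1) <+: zelWord p (k + 2)
      rw [zelWord]
      exact ((zelWord p (k+1)).prefix_append _).trans (List.prefix_append _ _)
  · intro n u w hu hw
    match n with
    | 0 =>
      simp only [zelWord, List.infix_nil] at hu hw
      exact ⟨[], 0, by simp [hu, hw, zelWord]⟩
    | k + 1 =>
      obtain ⟨a, b, hab⟩ := hu
      obtain ⟨c, d, hcd⟩ := hw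
      refine ⟨b ++ List.replicate (p (k+1)) false ++ c, k + 2, a, d, ?_⟩
      show a ++ (u ++ (b ++ List.replicate (p (k+1)) false ++ c) ++ w) ++ d =
        zelWord p (k + 2)
      rw [zelWord]
      nth_rw 1 [← hab]
      rw [← hcd]
      simp [List.append_assoc]
end

section
/- Let K be a field and let A be a finitely generated infinite-dimensional K-algebra such that A/I is finite-dimensional over K for every nonzero two-sided ideal I of A (i.e., A is just infinite). Then A is a prime ring. -/
open Submodule Pointwise

section aux

variable {K A : Type*} [Field K] [Ring A] [Algebra K A]

private lemma aux_le_tmt (X : Submodule K A) : X ≤ ⊤ * X * ⊤ := by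
  intro x hx
  have : (1 : A) * x * 1 ∈ ⊤ * X * ⊤ :=
    mul_mem_mul (mul_mem_mul mem_top hx) mem_top
  simpa using this

private lemma aux_tt : (⊤ : Submodule K A) * ⊤ = ⊤ := by
  refine le_antisymm le_top fun x _ => ?_
  have : x * (1 : A) ∈ (⊤ : Submodule K A) * ⊤ := mul_mem_mul mem_top mem_top
  simpa using this

private lemma aux_absorb_left (X Y : Submodule K A) : Y * (⊤ * X * ⊤) ≤ ⊤ * X * ⊤ := by
  calc Y * (⊤ * X * ⊤) ≤ ⊤ * (⊤ * X * ⊤) := mul_le_mul' le_top le_rfl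
    _ = (⊤ * ⊤) * X * ⊤ := by simp only [mul_assoc]
    _ = ⊤ * X * ⊤ := by rw [aux_tt]

private lemma aux_absorb_right (X Y : Submodule K A) : (⊤ * X * ⊤) * Y ≤ ⊤ * X * ⊤ := by
  calc (⊤ * X * ⊤) * Y ≤ (⊤ * X * ⊤) * ⊤ := mul_le_mul' le_rfl le_top
    _ = ⊤ * X * (⊤ * ⊤) := by simp only [mul_assoc]
    _ = ⊤ * X * ⊤ := by rw [aux_tt]

private lemma aux_closed (X : Submodule K A) :
    ∀ x ∈ ⊤ * X * ⊤, ∀ r : A, r * x ∈ ⊤ * X * ⊤ ∧ x * r ∈ ⊤ * X * ⊤ := by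
  intro x hx r
  exact ⟨aux_absorb_left X ⊤ (mul_mem_mul mem_top hx),
    aux_absorb_right X ⊤ (mul_mem_mul hx mem_top)⟩

end aux

theorem stmt15 {K A : Type*} [Field K] [Ring A] [Algebra K A]
    (hfg : Algebra.FiniteType K A)
    (hinf : ¬ FiniteDimensional K A)
    -- every nonzero two-sided ideal (viewed as a `K`-subspace closed under
    -- multiplication by `A` on both sides) has finite codimension
    (hji : ∀ I : Submodule K A, I ≠ ⊥ →
      (∀ a ∈ I, ∀ r : A, r * a ∈ I ∧ a * r ∈ I) →
      FiniteDimensional K (A ⧸ I)) :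
    ∀ a b : A, (∀ r : A, a * r * b = 0) → a = 0 ∨ b = 0 := by
  intro a b hab
  by_contra hcon
  push_neg at hcon
  obtain ⟨ha, hb⟩ := hcon
  apply hinf
  set Ia : Submodule K A := ⊤ * span K {a} * ⊤ with hIa
  set Ib : Submodule K A := ⊤ * span K {b} * ⊤ with hIb
  -- the key vanishing
  have key : span K {a} * ⊤ * span K {b} = (⊥ : Submodule K A) := by
    refine le_antisymm (Submodule.mul_le.2 fun m hm y hy => ?_) bot_le
    obtain ⟨c, rfl⟩ := mem_span_singleton.mp hy
    have hm0 : m * (c • b) = 0 := by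
      refine Submodule.mul_induction_on hm (fun x hx r _ => ?_) (fun p q hp hq => ?_)
      · obtain ⟨d, rfl⟩ := mem_span_singleton.mp hx
        simp [smul_mul_assoc, mul_smul_comm, hab r]
      · rw [add_mul, hp, hq, add_zero]
    simpa using hm0
  have hIJ : Ia * Ib = ⊥ := by
    calc Ia * Ib = ⊤ * span K {a} * (⊤ * ⊤) * span K {b} * ⊤ := by
          rw [hIa, hIb]; simp only [mul_assoc]
      _ = ⊤ * (span K {a} * ⊤ * span K {b}) * ⊤ := by rw [aux_tt]; simp only [mul_assoc]
      _ = ⊥ := by rw [key, mul_bot, bot_mul]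
  set N : Submodule K A := Ia ⊓ Ib with hNdef
  by_cases hN : N = ⊥
  · -- A embeds in (A⧸Ia) × (A⧸Ib)
    have haIa : a ∈ Ia := aux_le_tmt _ (subset_span rfl)
    have hbIb : b ∈ Ib := aux_le_tmt _ (subset_span rfl)
    have hIane : Ia ≠ ⊥ := fun h => ha (by simpa [h] using haIa)
    have hIbne : Ib ≠ ⊥ := fun h => hb (by simpa [h] using hbIb)
    haveI := hji Ia hIane (aux_closed _)
    haveI := hji Ib hIbne (aux_closed _)
    refine FiniteDimensional.of_injective (Ia.mkQ.prod Ib.mkQ) ?_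
    rw [← LinearMap.ker_eq_bot, LinearMap.ker_prod, Submodule.ker_mkQ, Submodule.ker_mkQ]
    exact hN
  · -- N is a nonzero two-sided ideal with N * N = ⊥
    have hNclosed : ∀ x ∈ N, ∀ r : A, r * x ∈ N ∧ x * r ∈ N := by
      intro x hx r
      obtain ⟨h1, h2⟩ := aux_closed (span K {a}) x hx.1 r
      obtain ⟨h3, h4⟩ := aux_closed (span K {b}) x hx.2 r
      exact ⟨⟨h1, h3⟩, ⟨h2, h4⟩⟩
    haveI hfdq : FiniteDimensional K (A ⧸ N) := hji N hN hNclosed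
    have hNN : N * N = ⊥ :=
      le_antisymm ((mul_le_mul' inf_le_left inf_le_right).trans hIJ.le) bot_le
    -- a finite-dimensional complement-ish V with V ⊔ N = ⊤ and 1 ∈ V
    obtain ⟨F, hF⟩ := Module.finite_def.mp hfdq
    choose lift hlift using N.mkQ_surjective
    set Tset : Set A := insert 1 (lift '' ↑F) with hTset
    have hTfin : Tset.Finite := (F.finite_toSet.image _).insert 1
    set V : Submodule K A := span K Tset with hV
    have hVfg : V.FG := fg_span hTfin
    have h1V : (1 : A) ∈ V := subset_span (Set.mem_insert _ _)
    have hVN : V ⊔ N = ⊤ := by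
      refine le_antisymm le_top fun x _ => ?_
      have hx : N.mkQ x ∈ Submodule.map N.mkQ V := by
        rw [hV, Submodule.map_span]
        refine span_le.2 ?_ (hF ▸ mem_top : N.mkQ x ∈ span K (↑F : Set (A ⧸ N)))
        intro y hy
        exact subset_span ⟨lift y, Set.mem_insert_iff.2 (Or.inr ⟨y, hy, rfl⟩), hlift y⟩
      obtain ⟨v, hvV, hveq⟩ := hx
      refine mem_sup.2 ⟨v, hvV, x - v, ?_, by abel⟩
      rw [← Submodule.Quotient.mk_eq_zero, Submodule.Quotient.mk_sub]
      change N.mkQ x - N.mkQ v = 0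
      rw [← hveq, sub_self]
    have hdec : ∀ x : A, ∃ v ∈ V, ∃ n ∈ N, v + n = x := fun x =>
      mem_sup.mp (hVN ▸ mem_top)
    choose vf hvf nf hnf hsum using hdec
    obtain ⟨s, hs⟩ := hfg.out
    set Gset : Set A := nf '' ((↑s : Set A) ∪ Tset * Tset) with hGset
    have hGfin : Gset.Finite := (s.finite_toSet.union (hTfin.mul hTfin)).image _
    set SG : Submodule K A := span K Gset with hSG
    have hSGfg : SG.FG := fg_span hGfin
    have hSGN : SG ≤ N := span_le.2 (by rintro _ ⟨x, -, rfl⟩; exact hnf x)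
    set N₀ : Submodule K A := ⊤ * SG * ⊤ with hN₀
    have hSGN₀ : SG ≤ N₀ := aux_le_tmt _
    set P : Submodule K A := V ⊔ N₀ with hP
    -- P is a subalgebra
    have hVVle : V * V ≤ P := by
      rw [hV, span_mul_span]
      refine span_le.2 fun t ht => ?_
      have hnft : nf t ∈ N₀ := hSGN₀ (subset_span ⟨t, Or.inr ht, rfl⟩)
      have := add_mem (mem_sup_left (hvf t) : vf t ∈ P) (mem_sup_right hnft)
      rwa [hsum t] at this
    have hPmul : ∀ x y : A, x ∈ P → y ∈ P → x * y ∈ P := by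
      have hPP : P * P ≤ P := by
        rw [hP, Submodule.sup_mul, Submodule.mul_sup, Submodule.mul_sup]
        refine sup_le (sup_le hVVle ?_) (sup_le ?_ ?_)
        · exact (aux_absorb_left SG V).trans le_sup_right
        · exact (aux_absorb_right SG V).trans le_sup_right
        · exact (aux_absorb_right SG N₀).trans le_sup_right
      exact fun x y hx hy => hPP (mul_mem_mul hx hy)
    have hP1 : (1 : A) ∈ P := mem_sup_left h1V
    have hPtop : P = ⊤ := by
      refine le_antisymm le_top fun x _ => ?_
      have hsub : (↑s : Set A) ⊆ (P.toSubalgebra hP1 hPmul : Set A) := by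
        intro x hx
        have hnfx : nf x ∈ N₀ := hSGN₀ (subset_span ⟨x, Or.inl hx, rfl⟩)
        have := add_mem (mem_sup_left (hvf x) : vf x ∈ P) (mem_sup_right hnfx)
        rwa [hsum x] at this
      have h := Algebra.adjoin_le hsub
      rw [hs] at h
      exact h (show x ∈ (⊤ : Subalgebra K A) from trivial)
    -- N₀ is finite dimensional
    have hN₀le : N₀ ≤ V * SG * V := by
      have hNSG : N * SG ≤ ⊥ := (mul_le_mul' le_rfl hSGN).trans hNN.le
      have hSGNb : SG * N ≤ ⊥ := (mul_le_mul' hSGN le_rfl).trans hNN.le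
      calc N₀ = (V ⊔ N) * SG * (V ⊔ N) := by rw [hN₀, hVN]
        _ = V * SG * (V ⊔ N) ⊔ N * SG * (V ⊔ N) := by rw [Submodule.sup_mul, Submodule.sup_mul]
        _ ≤ V * SG * (V ⊔ N) ⊔ ⊥ := by
            refine sup_le_sup_left ((mul_le_mul' hNSG le_rfl).trans ?_) _
            rw [bot_mul]
        _ = V * SG * V ⊔ V * SG * N := by rw [sup_bot_eq, Submodule.mul_sup]
        _ ≤ V * SG * V ⊔ ⊥ := by
            refine sup_le_sup_left ?_ _
            rw [mul_assoc]
            exact (mul_le_mul' le_rfl hSGNb).trans (by rw [mul_bot])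
        _ = V * SG * V := sup_bot_eq _
    have htopfg : (⊤ : Submodule K A).FG := by
      have htop : (⊤ : Submodule K A) = V ⊔ V * SG * V := by
        refine le_antisymm ?_ le_top
        rw [← hPtop, hP]
        exact sup_le_sup_left hN₀le V
      rw [htop]
      exact hVfg.sup ((hVfg.mul hSGfg).mul hVfg)
    exact Module.finite_def.mpr htopfg
end

section
/- Let K be a field, A a K-algebra, V a K-subspace with 1 ∈ V, and u ∈ V^k an element of A. Suppose there exist natural numbers i, m, p with p > m ≥ 1 such that u^i V^m ⊆ u^i V^{m-1} + u^{i+1} V^p. Then for all n > i, u^i V^n ⊆ u^i V^{m-1} + u^{i+1} V^{m-1} + ⋯ + u^{n-1} V^{m-1} + u^n V^{np+n}. -/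
theorem stmt17 {K A : Type*} [Field K] [Ring A] [Algebra K A]
    (V : Submodule K A) (hV : (1 : A) ∈ V) (k : ℕ) (u : A) (hu : u ∈ V ^ k)
    (i m p : ℕ) (hm : 1 ≤ m) (hmp : m < p)
    (h : Submodule.span K {u ^ i} * V ^ m ≤
      Submodule.span K {u ^ i} * V ^ (m - 1) + Submodule.span K {u ^ (i + 1)} * V ^ p) :
    ∀ n : ℕ, i < n →
      Submodule.span K {u ^ i} * V ^ n ≤
        (∑ j ∈ Finset.Ico i n, Submodule.span K {u ^ j} * V ^ (m - 1)) +
          Submodule.span K {u ^ n} * V ^ (n * p + n) := by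
  -- monotonicity of powers of V
  have hVle : ∀ a b : ℕ, a ≤ b → V ^ a ≤ V ^ b := by
    intro a b hab
    obtain ⟨c, rfl⟩ := Nat.exists_eq_add_of_le hab
    induction c with
    | zero => simp
    | succ c ih =>
        calc V^a ≤ V^(a+c) := ih (Nat.le_add_right _ _)
          _ = V^(a+c) * 1 := (mul_one _).symm
          _ ≤ V^(a+c) * V := mul_le_mul_right (Submodule.one_le.mpr hV) _
          _ = V^(a+c+1) := (pow_succ V (a+c)).symm
  have hspan : ∀ j : ℕ, (Submodule.span K {u} : Submodule K A) * Submodule.span K {u ^ j}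
      = Submodule.span K {u ^ (j+1)} := by
    intro j
    rw [Submodule.span_mul_span, Set.singleton_mul_singleton, ← pow_succ']
  -- the hypothesis propagates to all j ≥ i
  have hj : ∀ j : ℕ, i ≤ j → Submodule.span K {u ^ j} * V ^ m ≤
      Submodule.span K {u ^ j} * V ^ (m - 1) + Submodule.span K {u ^ (j + 1)} * V ^ p := by
    intro j hij
    induction j, hij using Nat.le_induction with
    | base => exact h
    | succ j hij ih =>
        calc Submodule.span K {u ^ (j+1)} * V ^ m
            = Submodule.span K {u} * (Submodule.span K {u ^ j} * V ^ m) := by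
              rw [← mul_assoc, hspan]
          _ ≤ Submodule.span K {u} * (Submodule.span K {u ^ j} * V ^ (m-1)
                + Submodule.span K {u ^ (j+1)} * V ^ p) := mul_le_mul_right ih _
          _ = Submodule.span K {u ^ (j+1)} * V ^ (m-1)
                + Submodule.span K {u ^ (j+2)} * V ^ p := by
              rw [mul_add, ← mul_assoc, ← mul_assoc, hspan, hspan]
  -- key step: lower the exponent of V all the way to m-1
  have step : ∀ j : ℕ, i ≤ j → ∀ t : ℕ, Submodule.span K {u ^ j} * V ^ t ≤
      Submodule.span K {u ^ j} * V ^ (m - 1) + Submodule.span K {u ^ (j + 1)} * V ^ (p + t) := by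
    intro j hij t
    induction t with
    | zero =>
        exact le_trans (mul_le_mul_right (hVle 0 (m-1) (Nat.zero_le _)) _) le_sup_left
    | succ t ih =>
        by_cases ht : t + 1 ≤ m - 1
        · exact le_trans (mul_le_mul_right (hVle _ _ ht) _) le_sup_left
        · have htm : m ≤ t + 1 := by omega
          calc Submodule.span K {u ^ j} * V ^ (t+1)
              = (Submodule.span K {u ^ j} * V ^ m) * V ^ (t + 1 - m) := by
                rw [mul_assoc, ← pow_add]
                congr 2
                omega
            _ ≤ (Submodule.span K {u ^ j} * V ^ (m-1)
                  + Submodule.span K {u ^ (j+1)} * V ^ p) * V ^ (t + 1 - m) :=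
                mul_le_mul_left (hj j hij) _
            _ = Submodule.span K {u ^ j} * V ^ (m - 1 + (t + 1 - m))
                  + Submodule.span K {u ^ (j+1)} * V ^ (p + (t + 1 - m)) := by
                rw [add_mul, mul_assoc, mul_assoc, ← pow_add, ← pow_add]
            _ ≤ Submodule.span K {u ^ j} * V ^ t
                  + Submodule.span K {u ^ (j+1)} * V ^ (p + (t+1)) :=
                add_le_add (mul_le_mul_right (hVle _ _ (by omega)) _)
                  (mul_le_mul_right (hVle _ _ (by omega)) _)
            _ ≤ (Submodule.span K {u ^ j} * V ^ (m-1)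
                  + Submodule.span K {u ^ (j+1)} * V ^ (p + t))
                  + Submodule.span K {u ^ (j+1)} * V ^ (p + (t+1)) :=
                add_le_add_left ih _
            _ ≤ Submodule.span K {u ^ j} * V ^ (m-1)
                  + Submodule.span K {u ^ (j+1)} * V ^ (p + (t+1)) := by
                rw [add_assoc]
                refine add_le_add_right ?_ _
                rw [Submodule.add_eq_sup]
                exact sup_le (mul_le_mul_right (hVle _ _ (by omega)) _) le_rfl
  -- iterate the step
  have main : ∀ s n : ℕ, Submodule.span K {u ^ i} * V ^ n ≤
      (∑ j ∈ Finset.Ico i (i + s), Submodule.span K {u ^ j} * V ^ (m - 1)) +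
        Submodule.span K {u ^ (i + s)} * V ^ (s * p + n) := by
    intro s
    induction s with
    | zero => intro n; simp
    | succ s ih =>
        intro n
        calc Submodule.span K {u ^ i} * V ^ n
            ≤ (∑ j ∈ Finset.Ico i (i + s), Submodule.span K {u ^ j} * V ^ (m - 1)) +
                Submodule.span K {u ^ (i + s)} * V ^ (s * p + n) := ih n
          _ ≤ (∑ j ∈ Finset.Ico i (i + s), Submodule.span K {u ^ j} * V ^ (m - 1)) +
                (Submodule.span K {u ^ (i + s)} * V ^ (m - 1) +
                  Submodule.span K {u ^ (i + s + 1)} * V ^ (p + (s * p + n))) :=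
              add_le_add_right (step (i + s) (Nat.le_add_right _ _) (s * p + n)) _
          _ = (∑ j ∈ Finset.Ico i (i + (s+1)), Submodule.span K {u ^ j} * V ^ (m - 1)) +
                Submodule.span K {u ^ (i + (s+1))} * V ^ ((s+1) * p + n) := by
              rw [show i + (s+1) = (i + s) + 1 by ring,
                Finset.sum_Ico_succ_top (Nat.le_add_right _ _), ← add_assoc]
              congr 2
              ring
  intro n hn
  refine le_trans (main (n - i) n) ?_
  have h1 : i + (n - i) = n := by omega
  rw [h1]
  refine add_le_add_right ?_ _
  exact mul_le_mul_right (hVle _ _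
    (Nat.add_le_add_right (Nat.mul_le_mul_right p (Nat.sub_le n i)) n)) _
end

section
/- There exists a constant C > 0 such that for every n ≥ 3 and every factor w of the infinite word v_∞ of length n, the number of occurrences of the letter x in w is at most C·log log n, where v_∞ is the limit of the words defined by v₁ = x, v_{n+1} = v_n y^{p_n} v_n with p_n = 2^(2^(2^(2^n))). -/
lemma zel_prefix_append_cases {α : Type*} {w a b : List α} (h : w <+: a ++ b) :
    w <+: a ∨ ∃ z, w = a ++ z ∧ z <+: b := by
  obtain ⟨t, ht⟩ := h
  rcases List.append_eq_append_iff.1 ht with ⟨a', ha, _⟩ | ⟨c', hw, hb⟩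
  · exact .inl ⟨a', ha.symm⟩
  · exact .inr ⟨c', hw, ⟨t, hb.symm⟩⟩

lemma zel_infix_append_cases {α : Type*} {w a b : List α} (h : w <:+: a ++ b) :
    w <:+: a ∨ w <:+: b ∨ ∃ w1 w2, w = w1 ++ w2 ∧ w1 <:+ a ∧ w2 <+: b := by
  obtain ⟨s, t, hst⟩ := h
  rw [List.append_assoc] at hst
  rcases List.append_eq_append_iff.1 hst with ⟨a', ha, hwt⟩ | ⟨c', hs, hb⟩
  · rcases List.append_eq_append_iff.1 hwt with ⟨e, ha', ht⟩ | ⟨e, hw, hbb⟩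
    · left
      exact ⟨s, e, by rw [ha, ha', List.append_assoc]⟩
    · right; right
      exact ⟨a', e, hw, ⟨s, ha.symm⟩, ⟨t, hbb.symm⟩⟩
  · right; left
    exact ⟨c', t, by rw [hb, List.append_assoc]⟩

lemma zel_count (p : ℕ → ℕ) : ∀ m, (zelWord p (m + 1)).count true = 2 ^ m := by
  intro m
  induction m with
  | zero => rfl
  | succ m ih =>
    show (zelWord p (m+1) ++ List.replicate (p (m+1)) false ++ zelWord p (m+1)).count true = _
    simp [List.count_append, ih, List.count_replicate, pow_succ]
    ring

lemma zel_count_le (p : ℕ → ℕ) {m : ℕ} {w : List Bool} (h : List.Sublist w (zelWord p (m + 1))) :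
    w.count true ≤ 2 ^ m := by
  rw [← zel_count p m]; exact h.count_le true

lemma zel_main (p : ℕ → ℕ) (hp : Monotone p) :
    ∀ m (w : List Bool), w <:+: zelWord p m → ∀ j, 2 ^ (j + 1) < w.count true →
      p (j + 1) ≤ w.length := by
  intro m
  induction m with
  | zero =>
    intro w hw j hj
    rw [List.infix_nil.1 hw] at hj; simp at hj
  | succ m ih =>
    match m, ih with
    | 0, _ =>
      intro w hw j hj
      have h1 : w.count true ≤ List.count true [true] := hw.sublist.count_le true
      have h2 : (2:ℕ) ≤ 2 ^ (j + 1) := by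
        calc (2:ℕ) = 2 ^ 1 := rfl
        _ ≤ 2 ^ (j + 1) := Nat.pow_le_pow_right (by norm_num) (by omega)
      simp at h1
      omega
    | m + 1, ih =>
      intro w hw j hj
      have hA : ∀ w' : List Bool, w' <:+: zelWord p (m + 1) → w'.length ≤ w.length →
          w'.count true = w.count true → p (j + 1) ≤ w.length := by
        intro w' h1 h2 h3
        exact le_trans (ih w' h1 j (h3 ▸ hj)) h2
      have hBcount : ∀ w' : List Bool, List.Sublist w' (List.replicate (p (m + 1)) false) →
          w'.count true = 0 := by
        intro w' h1
        have := h1.count_le true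
        simpa [List.count_replicate] using this
      rw [show zelWord p (m + 2) = zelWord p (m + 1) ++
          (List.replicate (p (m + 1)) false ++ zelWord p (m + 1)) by
        simp [zelWord, List.append_assoc]] at hw
      rcases zel_infix_append_cases hw with h | h | ⟨w1, w2, hw12, h1, h2⟩
      · exact ih w h j hj
      · rcases zel_infix_append_cases h with h | h | ⟨w1, w2, hw12, h1, h2⟩
        · have h0 := hBcount w h.sublist
          rw [h0] at hj
          exact absurd hj (Nat.not_lt.2 (Nat.zero_le _))
        · exact ih w h j hj
        · have hc1 : w1.count true = 0 := hBcount w1 h1.sublist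
          have : w2.count true = w.count true := by
            rw [hw12, List.count_append]; omega
          exact hA w2 h2.isInfix (by rw [hw12]; simp) this
      · -- w1 is a suffix of zelWord p (m+1), w2 a prefix of replicate ++ zelWord
        rcases zel_prefix_append_cases h2 with h2' | ⟨z, hz, hzpre⟩
        · have hc2 : w2.count true = 0 := hBcount w2 h2'.sublist
          have : w1.count true = w.count true := by
            rw [hw12, List.count_append]; omega
          exact hA w1 h1.isInfix (by rw [hw12]; simp) this
        · -- w contains the full middle replicate block
          have hcw1 : w1.count true ≤ 2 ^ m := zel_count_le p h1.sublist
          have hcz : z.count true ≤ 2 ^ m := zel_count_le p hzpre.sublist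
          have hcw : w.count true ≤ 2 ^ (m + 1) := by
            rw [hw12, hz]
            simp only [List.count_append, List.count_replicate, pow_succ]
            norm_num
            omega
          have hjm : j + 1 ≤ m + 1 := by
            by_contra hcon
            have : m + 2 ≤ j + 1 := by omega
            have : 2 ^ (m + 1) < 2 ^ (j + 1) :=
              Nat.pow_lt_pow_right one_lt_two (by omega)
            omega
          have : p (j + 1) ≤ p (m + 1) := hp hjm
          have hlen : p (m + 1) ≤ w.length := by
            rw [hw12, hz]
            simp [List.length_append]
            omega
          omega

theorem stmt19 :
    ∃ C : ℝ, 0 < C ∧ ∀ n : ℕ, 3 ≤ n → ∀ w : List Bool, w.length = n →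
      (∃ m : ℕ, w <:+: zelWord (fun i => 2 ^ (2 ^ (2 ^ (2 ^ i)))) m) →
      (w.count true : ℝ) ≤ C * Real.log (Real.log n) := by
  set p : ℕ → ℕ := fun i => 2 ^ (2 ^ (2 ^ (2 ^ i))) with hpdef
  have hpmono : Monotone p := by
    intro i j h
    exact Nat.pow_le_pow_right (by norm_num)
      (Nat.pow_le_pow_right (by norm_num)
        (Nat.pow_le_pow_right (by norm_num) (Nat.pow_le_pow_right (by norm_num) h)))
  have h3 : (1 : ℝ) < Real.log 3 := by
    rw [show (1 : ℝ) = Real.log (Real.exp 1) by simp]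
    exact Real.log_lt_log (Real.exp_pos 1) (lt_of_lt_of_le Real.exp_one_lt_d9 (by norm_num))
  have hll3 : 0 < Real.log (Real.log 3) := Real.log_pos h3
  refine ⟨4 + 2 / Real.log (Real.log 3), by positivity, ?_⟩
  intro n hn w hlen ⟨m, hinf⟩
  have hlln : Real.log (Real.log 3) ≤ Real.log (Real.log n) := by
    apply Real.log_le_log (by linarith)
    apply Real.log_le_log (by norm_num)
    exact_mod_cast hn
  have hllnpos : 0 < Real.log (Real.log n) := lt_of_lt_of_le hll3 hlln
  set k := w.count true with hk
  by_cases hk2 : k ≤ 2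
  · have hk2' : (k : ℝ) ≤ 2 := by exact_mod_cast hk2
    have h1 : 2 / Real.log (Real.log 3) * Real.log (Real.log n) ≥ 2 := by
      rw [ge_iff_le, div_mul_eq_mul_div, le_div_iff₀ hll3]
      nlinarith
    nlinarith
  · push_neg at hk2
    set j1 := Nat.log 2 (k - 1) with hj1
    have hj1ge : 1 ≤ j1 := by
      rw [hj1]
      exact (Nat.le_log_iff_pow_le (by norm_num) (by omega)).2 (by omega : 2 ^ 1 ≤ k - 1)
    have hlow : 2 ^ j1 < k := by
      have := Nat.pow_log_le_self 2 (show k - 1 ≠ 0 by omega)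
      rw [← hj1] at this
      omega
    have hhigh : k ≤ 2 ^ (j1 + 1) := by
      have := Nat.lt_pow_succ_log_self (show 1 < 2 by norm_num) (k - 1)
      rw [← hj1] at this
      omega
    have hmain : p j1 ≤ w.length := by
      have := zel_main p hpmono m w hinf (j1 - 1) (by
        rwa [show j1 - 1 + 1 = j1 by omega])
      rwa [show j1 - 1 + 1 = j1 by omega] at this
    rw [hlen] at hmain
    -- so 2^(2^(2^(2^j1))) ≤ n
    set a := 2 ^ j1 with ha
    have haa : 2 ≤ a := by
      calc 2 = 2 ^ 1 := rfl
      _ ≤ 2 ^ j1 := Nat.pow_le_pow_right (by norm_num) hj1ge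
    set b := 2 ^ a with hb
    have hab : a + 1 ≤ b := by
      have := Nat.lt_two_pow_self (n := a)
      omega
    set c := 2 ^ b with hc
    have hcn : (2 : ℕ) ^ c ≤ n := hmain
    have hlog2 : (1 : ℝ) / 2 ≤ Real.log 2 := by
      have := Real.log_two_gt_d9; linarith
    have hcR : ((2 : ℝ) ^ c) ≤ (n : ℝ) := by exact_mod_cast hcn
    have hlogn : (c : ℝ) * Real.log 2 ≤ Real.log n := by
      calc (c : ℝ) * Real.log 2 = Real.log ((2 : ℝ) ^ c) := (by rw [Real.log_pow] : _)
      _ ≤ Real.log n := Real.log_le_log (by positivity) hcR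
    have hc2a : (2 : ℝ) ^ (a + 1) ≤ (c : ℝ) := by
      rw [hc]
      push_cast
      exact pow_le_pow_right₀ (by norm_num) hab
    have hlogn2 : (2 : ℝ) ^ a ≤ Real.log n := by
      have h1 : (2 : ℝ) ^ a = (2 : ℝ) ^ (a + 1) * (1 / 2) := by ring
      have h2 : (2 : ℝ) ^ (a + 1) * (1 / 2) ≤ (c : ℝ) * Real.log 2 := by
        apply mul_le_mul hc2a hlog2 (by norm_num) (by positivity)
      linarith
    have hloglogn : (a : ℝ) / 2 ≤ Real.log (Real.log n) := by
      have h1 : Real.log ((2 : ℝ) ^ a) ≤ Real.log (Real.log n) :=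
        Real.log_le_log (by positivity) hlogn2
      rw [Real.log_pow] at h1
      have : (a : ℝ) / 2 ≤ (a : ℝ) * Real.log 2 := by
        rcases (by positivity : (0:ℝ) ≤ (a:ℝ)) with h
        nlinarith
      linarith
    have hkR : (k : ℝ) ≤ 2 * (a : ℝ) := by
      have : k ≤ 2 * a := by
        rw [ha]
        calc k ≤ 2 ^ (j1 + 1) := hhigh
        _ = 2 * 2 ^ j1 := by ring
      exact_mod_cast this
    have h4 : (k : ℝ) ≤ 4 * Real.log (Real.log n) := by linarith
    have hextra : 0 ≤ 2 / Real.log (Real.log 3) * Real.log (Real.log n) := by positivity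
    nlinarith
end
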